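/- Let ρ be a density operator on C^{k_A} ⊗ C^{k_B} with margins ρ_A = tr_B ρ and ρ_B = tr_A ρ of full rank, i.e., rank ρ_A = k_A and rank ρ_B = k_B, with k_A ≤ k_B. Then ⌈k_B/k_A⌉ ≤ rank ρ ≤ k_A·k_B. -/

import Mathlib

section aux
variable {l o m n : Type*} [Fintype m] [Fintype n] [Fintype l] [Fintype o]
  [DecidableEq m] [DecidableEq n]

lemma my_rank_submatrix_le (f : l → m) (g : o → n) (A : Matrix m n ℂ) :
    (A.submatrix f g).rank ≤ A.rank := by
  have h : A.submatrix f g =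
      ((1 : Matrix m m ℂ).submatrix f id) * A * ((1 : Matrix n n ℂ).submatrix id g) := by
    ext i j
    simp [Matrix.mul_apply, Matrix.one_apply, Finset.sum_ite_eq, Finset.sum_ite_eq']
  rw [h]
  exact le_trans (Matrix.rank_mul_le_left _ _) (Matrix.rank_mul_le_right _ _)

lemma my_rank_add_le (A B : Matrix m n ℂ) : (A + B).rank ≤ A.rank + B.rank := by
  classical
  have h : LinearMap.range (A + B).mulVecLin ≤
      LinearMap.range A.mulVecLin ⊔ LinearMap.range B.mulVecLin := by
    rintro x ⟨v, rfl⟩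
    rw [Matrix.mulVecLin_add]
    exact Submodule.add_mem_sup ⟨v, rfl⟩ ⟨v, rfl⟩
  refine le_trans (Submodule.finrank_mono h) ?_
  exact Submodule.finrank_add_le_finrank_add_finrank _ _

lemma my_rank_sum_le {ι : Type*} (s : Finset ι) (f : ι → Matrix m n ℂ) :
    (∑ i ∈ s, f i).rank ≤ ∑ i ∈ s, (f i).rank := by
  classical
  induction s using Finset.induction with
  | empty => simp
  | insert _ _ h ih =>
    rw [Finset.sum_insert h, Finset.sum_insert h]
    exact le_trans (my_rank_add_le _ _) (by omega)

end aux

open ComplexOrder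

/-- Partial trace over the second tensor factor. -/
noncomputable def trB {n m : ℕ} (ρ : Matrix (Fin n × Fin m) (Fin n × Fin m) ℂ) :
    Matrix (Fin n) (Fin n) ℂ :=
  fun a a' => ∑ b : Fin m, ρ (a, b) (a', b)

/-- Partial trace over the first tensor factor. -/
noncomputable def trA {n m : ℕ} (ρ : Matrix (Fin n × Fin m) (Fin n × Fin m) ℂ) :
    Matrix (Fin m) (Fin m) ℂ :=
  fun b b' => ∑ a : Fin n, ρ (a, b) (a, b')

/-- for a bipartite density operator `ρ` on `ℂ^{kA} ⊗ ℂ^{kB}` whose margins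
have full ranks `kA ≤ kB`, one has `⌈kB / kA⌉ ≤ rank ρ ≤ kA * kB`. -/
theorem rank_bounds_of_full_rank_margins (kA kB : ℕ) (hk : kA ≤ kB)
    (ρ : Matrix (Fin kA × Fin kB) (Fin kA × Fin kB) ℂ)
    (hpsd : ρ.PosSemidef) (htr : ρ.trace = 1)
    (hA : (trB ρ).rank = kA) (hB : (trA ρ).rank = kB) :
    (kB + kA - 1) / kA ≤ ρ.rank ∧ ρ.rank ≤ kA * kB := by
  have hupper : ρ.rank ≤ kA * kB := by
    have := ρ.rank_le_card_height
    simpa using this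
  have hsum : trA ρ = ∑ a : Fin kA,
      ρ.submatrix (fun b => (a, b)) (fun b => (a, b)) := by
    ext b b'
    simp [trA, Matrix.sum_apply]
  have hlow : kB ≤ kA * ρ.rank := by
    calc kB = (trA ρ).rank := hB.symm
      _ ≤ ∑ a : Fin kA, (ρ.submatrix (fun b => (a, b)) (fun b => (a, b))).rank := by
          rw [hsum]; exact my_rank_sum_le _ _
      _ ≤ ∑ _a : Fin kA, ρ.rank :=
          Finset.sum_le_sum fun a _ => my_rank_submatrix_le _ _ ρ
      _ = kA * ρ.rank := by simp [Finset.sum_const, mul_comm]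
  refine ⟨?_, hupper⟩
  rcases Nat.eq_zero_or_pos kA with h0 | h0
  · simp [h0]
  · rw [Nat.div_le_iff_le_mul_add_pred h0]
    omega
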